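/- Let θ : ℝ^m → (−∞,∞] be a proper closed convex function, A : ℝ^m → ℝ^n linear, c ∈ ℝ^n, z ∈ ℝ^n and λ > 0. Define h(·) = θ*(−A*·)+⟨c,·⟩. If ν̃ ∈ ℝ^m minimizes ν ↦ θ(ν)+⟨z, Aν−c⟩+(λ/2)‖Aν−c‖² over ℝ^m, then, setting ẑ = z+λ(Aν̃−c), one has c−Aν̃ ∈ ∂h(ẑ); consequently ẑ + λw = z with w := c−Aν̃ ∈ ∂h(ẑ), i.e. ẑ = (I+λ∂h)^{-1}(z). -/

import Mathlib

open scoped RealInnerProductSpace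

noncomputable section

/-- `w` is a subgradient of the extended-real-valued function `φ` at `x`. -/
def HasSubgrad {E : Type*} [NormedAddCommGroup E] [InnerProductSpace ℝ E]
    (φ : E → EReal) (w x : E) : Prop :=
  ∀ x' : E, φ x + ((⟪w, x' - x⟫ : ℝ) : EReal) ≤ φ x'

/-- `w` is an `ε`-subgradient of `φ` at `x`. -/
def HasESubgrad {E : Type*} [NormedAddCommGroup E] [InnerProductSpace ℝ E]
    (φ : E → EReal) (ε : ℝ) (w x : E) : Prop :=
  ∀ x' : E, φ x + ((⟪w, x' - x⟫ : ℝ) : EReal) - (ε : EReal) ≤ φ x'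

/-- Convexity for an extended-real-valued function. -/
def ConvexE {E : Type*} [NormedAddCommGroup E] [InnerProductSpace ℝ E]
    (φ : E → EReal) : Prop :=
  ∀ x y : E, ∀ a b : ℝ, 0 ≤ a → 0 ≤ b → a + b = 1 →
    φ (a • x + b • y) ≤ (a : EReal) * φ x + (b : EReal) * φ y

/-- Proper closed convex function with values in `(-∞, ∞]`. -/
def IsPCC {E : Type*} [NormedAddCommGroup E] [InnerProductSpace ℝ E]
    (φ : E → EReal) : Prop :=
  (∀ x, φ x ≠ ⊥) ∧ (∃ x, φ x ≠ ⊤) ∧ LowerSemicontinuous φ ∧ ConvexE φ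

/-- Fenchel conjugate. -/
def fconj {E : Type*} [NormedAddCommGroup E] [InnerProductSpace ℝ E]
    (φ : E → EReal) (w : E) : EReal :=
  ⨆ x : E, ((⟪w, x⟫ : ℝ) : EReal) - φ x

/-- Lagrangian of `min { f u + g v : M u + C v = d }`. -/
def Lag {E₁ E₂ F : Type*} [NormedAddCommGroup E₁] [InnerProductSpace ℝ E₁]
    [NormedAddCommGroup E₂] [InnerProductSpace ℝ E₂]
    [NormedAddCommGroup F] [InnerProductSpace ℝ F]
    (f : E₁ → EReal) (g : E₂ → EReal) (M : E₁ →ₗ[ℝ] F) (C : E₂ →ₗ[ℝ] F) (d : F)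
    (u : E₁) (v : E₂) (z : F) : EReal :=
  f u + g v + ((⟪M u + C v - d, z⟫ : ℝ) : EReal)

/-- Saddle point of the Lagrangian. -/
def IsSaddle {E₁ E₂ F : Type*} [NormedAddCommGroup E₁] [InnerProductSpace ℝ E₁]
    [NormedAddCommGroup E₂] [InnerProductSpace ℝ E₂]
    [NormedAddCommGroup F] [InnerProductSpace ℝ F]
    (f : E₁ → EReal) (g : E₂ → EReal) (M : E₁ →ₗ[ℝ] F) (C : E₂ →ₗ[ℝ] F) (d : F)
    (us : E₁) (vs : E₂) (zs : F) : Prop :=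
  Lag f g M C d us vs zs ≠ ⊤ ∧ Lag f g M C d us vs zs ≠ ⊥ ∧
  (∀ u v, Lag f g M C d us vs zs ≤ Lag f g M C d u v zs) ∧
  (∀ ζ, Lag f g M C d us vs ζ ≤ Lag f g M C d us vs zs)

/-- `h₁(z) = f*(-M* z)`. -/
def hOne {E₁ F : Type*} [NormedAddCommGroup E₁] [InnerProductSpace ℝ E₁]
    [FiniteDimensional ℝ E₁] [NormedAddCommGroup F] [InnerProductSpace ℝ F]
    [FiniteDimensional ℝ F] (f : E₁ → EReal) (M : E₁ →ₗ[ℝ] F) (z : F) : EReal :=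
  fconj f (-(LinearMap.adjoint M z))

/-- `h₂(z) = g*(-C* z) + ⟪d, z⟫`. -/
def hTwo {E₂ F : Type*} [NormedAddCommGroup E₂] [InnerProductSpace ℝ E₂]
    [FiniteDimensional ℝ E₂] [NormedAddCommGroup F] [InnerProductSpace ℝ F]
    [FiniteDimensional ℝ F] (g : E₂ → EReal) (C : E₂ →ₗ[ℝ] F) (d : F) (z : F) : EReal :=
  fconj g (-(LinearMap.adjoint C z)) + ((⟪d, z⟫ : ℝ) : EReal)

/-- The extended solution set `S_e(∂h₁, ∂h₂)`. -/
def extSolSet {E₁ E₂ F : Type*} [NormedAddCommGroup E₁] [InnerProductSpace ℝ E₁]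
    [FiniteDimensional ℝ E₁] [NormedAddCommGroup E₂] [InnerProductSpace ℝ E₂]
    [FiniteDimensional ℝ E₂] [NormedAddCommGroup F] [InnerProductSpace ℝ F]
    [FiniteDimensional ℝ F]
    (f : E₁ → EReal) (g : E₂ → EReal) (M : E₁ →ₗ[ℝ] F) (C : E₂ →ₗ[ℝ] F) (d : F) :
    Set (F × F) :=
  {p | HasSubgrad (hOne f M) (-p.2) p.1 ∧ HasSubgrad (hTwo g C d) p.2 p.1}

private lemma limit_lemma (K c0 : ℝ) (hc : 0 ≤ c0)
    (h : ∀ t : ℝ, 0 < t → t < 1 → -(t * c0) ≤ K) : 0 ≤ K := by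
  by_contra hK
  push_neg at hK
  have hc1 : (0:ℝ) < c0 + 1 := by linarith
  have ht0 : 0 < -K / (c0 + 1) := div_pos (by linarith) hc1
  set t := min (1/2 : ℝ) (-K / (c0 + 1)) with htdef
  have h1 : 0 < t := lt_min (by norm_num) ht0
  have h2 : t < 1 := lt_of_le_of_lt (min_le_left _ _) (by norm_num)
  have h3 : t ≤ -K / (c0 + 1) := min_le_right _ _
  have h4 : t * (c0 + 1) ≤ -K := by
    rw [← le_div_iff₀ hc1]; exact h3
  have h5 := h t h1 h2
  nlinarith

/-- if `ν̃` minimizes `ν ↦ θ(ν) + ⟪z, Aν - c⟫ + (λ/2)‖Aν - c‖²`, then, with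
`ẑ = z + λ(Aν̃ - c)` and `w = c - Aν̃`, one has `w ∈ ∂h(ẑ)` and `ẑ + λ w = z`, where
`h(·) = θ*(-A*·) + ⟪c, ·⟫`; i.e. `ẑ = (I + λ∂h)⁻¹(z)`. -/
theorem resolvent_via_min (m n : ℕ)
    (θ : EuclideanSpace ℝ (Fin m) → EReal) (hθ : IsPCC θ)
    (A : EuclideanSpace ℝ (Fin m) →ₗ[ℝ] EuclideanSpace ℝ (Fin n))
    (c z : EuclideanSpace ℝ (Fin n)) (lam : ℝ) (hlam : 0 < lam)
    (ν : EuclideanSpace ℝ (Fin m))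
    (hmin : ∀ ν' : EuclideanSpace ℝ (Fin m),
      θ ν + ((⟪z, A ν - c⟫ + lam / 2 * ‖A ν - c‖ ^ 2 : ℝ) : EReal) ≤
        θ ν' + ((⟪z, A ν' - c⟫ + lam / 2 * ‖A ν' - c‖ ^ 2 : ℝ) : EReal)) :
    HasSubgrad (hTwo θ A c) (c - A ν) (z + lam • (A ν - c)) ∧
      (z + lam • (A ν - c)) + lam • (c - A ν) = z := by
  obtain ⟨hbot, ⟨x₀, hx₀⟩, _, hconv⟩ := hθ
  set zh := z + lam • (A ν - c) with hzhdef
  -- θ ν is finite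
  have hνtop : θ ν ≠ ⊤ := by
    intro hT
    have h1 := hmin x₀
    rw [hT] at h1
    rw [EReal.top_add_of_ne_bot (by exact EReal.coe_ne_bot _)] at h1
    have h2 : θ x₀ + ((⟪z, A x₀ - c⟫ + lam / 2 * ‖A x₀ - c‖ ^ 2 : ℝ) : EReal) < ⊤ :=
      EReal.add_lt_top hx₀ (EReal.coe_ne_top _)
    exact absurd (top_le_iff.mp h1) h2.ne
  set θν : ℝ := (θ ν).toReal with hθνdef
  have hθν : ((θν : ℝ) : EReal) = θ ν := EReal.coe_toReal hνtop (hbot ν)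
  -- key subgradient inequality: -A* zh ∈ ∂θ(ν)
  have hkey : ∀ (x : EuclideanSpace ℝ (Fin m)) (θx : ℝ), θ x = ((θx : ℝ) : EReal) →
      θν ≤ θx + ⟪zh, A x - A ν⟫ := by
    intro x θx hx
    set Δ := A x - A ν with hΔdef
    set y := A ν - c with hydef
    have hΔnn : (0:ℝ) ≤ lam / 2 * ‖Δ‖ ^ 2 := by positivity
    have hlim : ∀ t : ℝ, 0 < t → t < 1 →
        -(t * (lam / 2 * ‖Δ‖ ^ 2)) ≤ θx + ⟪zh, Δ⟫ - θν := by
      intro t ht0 ht1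
      have hc1 := hconv x ν t (1 - t) (le_of_lt ht0) (by linarith) (by ring)
      rw [hx, ← hθν, ← EReal.coe_mul, ← EReal.coe_mul, ← EReal.coe_add] at hc1
      have hm := hmin (t • x + (1 - t) • ν)
      have hA : A (t • x + (1 - t) • ν) - c = y + t • Δ := by
        rw [map_add, map_smul, map_smul, hΔdef, hydef]; module
      rw [hA, ← hθν] at hm
      have hch := le_trans hm (add_le_add_left hc1 _)
      rw [← EReal.coe_add, ← EReal.coe_add, EReal.coe_le_coe_iff] at hch
      have hnorm : ‖y + t • Δ‖ ^ 2 = ‖y‖ ^ 2 + 2 * (t * ⟪y, Δ⟫) + t ^ 2 * ‖Δ‖ ^ 2 := by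
        rw [norm_add_sq_real, real_inner_smul_right, norm_smul, Real.norm_eq_abs,
          mul_pow, sq_abs]
      have hzy : ⟪z, y + t • Δ⟫ = ⟪z, y⟫ + t * ⟪z, Δ⟫ := by
        rw [inner_add_right, real_inner_smul_right]
      have hzhΔ : ⟪zh, Δ⟫ = ⟪z, Δ⟫ + lam * ⟪y, Δ⟫ := by
        rw [hzhdef, inner_add_left, real_inner_smul_left, hydef]
      rw [hnorm, hzy] at hch
      rw [hzhΔ]
      nlinarith [hch, ht0, mul_pos ht0 ht0]
    have h0 := limit_lemma _ _ hΔnn hlim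
    linarith
  set w : EuclideanSpace ℝ (Fin m) := -(LinearMap.adjoint A zh) with hwdef
  -- Fenchel conjugate value at -A* zh
  have hwx : ∀ u : EuclideanSpace ℝ (Fin n), ∀ x : EuclideanSpace ℝ (Fin m),
      ⟪-(LinearMap.adjoint A u), x⟫ = -⟪u, A x⟫ := by
    intro u x
    rw [inner_neg_left, LinearMap.adjoint_inner_left]
  have hconj : fconj θ w = ((⟪w, ν⟫ - θν : ℝ) : EReal) := by
    apply le_antisymm
    · apply iSup_le
      intro x
      by_cases hx : θ x = ⊤
      · rw [hx]
        rw [sub_eq_add_neg, EReal.neg_top, EReal.add_bot]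
        exact bot_le
      · have hxr : θ x = (((θ x).toReal : ℝ) : EReal) := (EReal.coe_toReal hx (hbot x)).symm
        rw [hxr, ← EReal.coe_sub, EReal.coe_le_coe_iff]
        have hk := hkey x _ hxr
        have h1 := hwx zh x
        have h2 := hwx zh ν
        rw [inner_sub_right] at hk
        linarith
    · have h1 := le_iSup (fun x => ((⟪w, x⟫ : ℝ) : EReal) - θ x) ν
      rw [← hθν, ← EReal.coe_sub] at h1
      exact h1
  refine ⟨?_, by rw [hzhdef, smul_sub, smul_sub]; abel⟩
  intro z'
  show (fconj θ w + ((⟪c, zh⟫ : ℝ) : EReal)) + _ ≤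
    fconj θ (-(LinearMap.adjoint A z')) + ((⟪c, z'⟫ : ℝ) : EReal)
  rw [hconj, ← EReal.coe_add, ← EReal.coe_add]
  have hR : ((⟪-(LinearMap.adjoint A z'), ν⟫ - θν + ⟪c, z'⟫ : ℝ) : EReal) ≤
      fconj θ (-(LinearMap.adjoint A z')) + ((⟪c, z'⟫ : ℝ) : EReal) := by
    rw [EReal.coe_add]
    refine add_le_add_left ?_ _
    have h1 := le_iSup (fun x => ((⟪-(LinearMap.adjoint A z'), x⟫ : ℝ) : EReal) - θ x) ν
    rw [← hθν, ← EReal.coe_sub] at h1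
    exact h1
  refine le_trans ?_ hR
  rw [EReal.coe_le_coe_iff]
  have h1 := hwx zh ν
  have h2 := hwx z' ν
  rw [hwdef]
  rw [h1, h2, inner_sub_left, inner_sub_right, inner_sub_right, real_inner_comm (A ν) zh,
    real_inner_comm (A ν) z']
  linarith
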